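/- Let a ≥ 0 and let V : [0,1] → ℝ be continuous with V ≥ 1 satisfying V(t) = 1 + a·∫_0^t ∫_0^x (1/V(y)) dy dx. For each N, let V̄_N : [0,1] → ℝ with V̄_N ≥ 1 satisfy V̄_N(t) = 1 + a·∫_0^t ∫_0^s (1/V̄_N(u)) du ds + R̄_N(t), where sup_{0≤t≤1} |R̄_N(t)| → 0 as N → ∞. Then sup_{0≤t≤1} |V̄_N(t) − V(t)| → 0 as N → ∞. -/

import Mathlib

open MeasureTheory intervalIntegral Set

lemma key_bound (a : ℝ) (ha : 0 ≤ a)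
    (V W R : ℝ → ℝ)
    (hV_cont : ContinuousOn V (Set.Icc (0:ℝ) 1))
    (hV1 : ∀ t ∈ Set.Icc (0:ℝ) 1, 1 ≤ V t)
    (hV : ∀ t ∈ Set.Icc (0:ℝ) 1,
      V t = 1 + a * ∫ x in (0:ℝ)..t, (∫ y in (0:ℝ)..x, 1 / V y))
    (hW_meas : Measurable W)
    (hW1 : ∀ t ∈ Set.Icc (0:ℝ) 1, 1 ≤ W t)
    (hW : ∀ t ∈ Set.Icc (0:ℝ) 1,
      W t = 1 + a * (∫ s in (0:ℝ)..t, (∫ u in (0:ℝ)..s, 1 / W u)) + R t)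
    (ε : ℝ) (hε : 0 ≤ ε) (hRε : ∀ t ∈ Set.Icc (0:ℝ) 1, |R t| ≤ ε) :
    ∀ t ∈ Set.Icc (0:ℝ) 1, |W t - V t| ≤ ε * Real.exp a := by
  set f₁ : ℝ → ℝ := fun u => 1 / W u with hf₁def
  set f₂ : ℝ → ℝ := fun u => 1 / V u with hf₂def
  set d : ℝ → ℝ := fun u => f₁ u - f₂ u with hddef
  have hIcc : MeasurableSet (Set.Icc (0:ℝ) 1) := measurableSet_Icc
  -- basic bounds
  have hWpos : ∀ u ∈ Set.Icc (0:ℝ) 1, 0 < W u := fun u hu => lt_of_lt_of_le one_pos (hW1 u hu)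
  have hVpos : ∀ u ∈ Set.Icc (0:ℝ) 1, 0 < V u := fun u hu => lt_of_lt_of_le one_pos (hV1 u hu)
  have hf₁bd : ∀ u ∈ Set.Icc (0:ℝ) 1, |f₁ u| ≤ 1 := by
    intro u hu
    rw [abs_of_pos (one_div_pos.2 (hWpos u hu)), div_le_one (hWpos u hu)]
    exact hW1 u hu
  have hf₂bd : ∀ u ∈ Set.Icc (0:ℝ) 1, |f₂ u| ≤ 1 := by
    intro u hu
    rw [abs_of_pos (one_div_pos.2 (hVpos u hu)), div_le_one (hVpos u hu)]
    exact hV1 u hu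
  have hdbd : ∀ u ∈ Set.Icc (0:ℝ) 1, |d u| ≤ |W u - V u| := by
    intro u hu
    have h1 : (1:ℝ) ≤ W u := hW1 u hu
    have h2 : (1:ℝ) ≤ V u := hV1 u hu
    have hWne : W u ≠ 0 := by positivity
    have hVne : V u ≠ 0 := by positivity
    have : d u = (V u - W u) / (W u * V u) := by
      simp only [hddef, hf₁def, hf₂def]
      field_simp
    rw [this, abs_div]
    have h3 : (1:ℝ) ≤ |W u * V u| := by
      rw [abs_of_pos (by positivity)]
      nlinarith
    calc |V u - W u| / |W u * V u| ≤ |V u - W u| := div_le_self (abs_nonneg _) h3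
      _ = |W u - V u| := abs_sub_comm _ _
  -- integrability
  have hf₁meas : Measurable f₁ := by
    simpa [hf₁def, one_div] using hW_meas
  have hf₁On : IntegrableOn f₁ (Set.Icc (0:ℝ) 1) := by
    apply Measure.integrableOn_of_bounded (M := 1)
      (by simp) hf₁meas.aestronglyMeasurable
    rw [ae_restrict_iff' hIcc]
    exact Filter.Eventually.of_forall fun u hu => hf₁bd u hu
  have hf₂cont : ContinuousOn f₂ (Set.Icc (0:ℝ) 1) :=
    continuousOn_const.div hV_cont fun u hu => ne_of_gt (hVpos u hu)
  have hf₂On : IntegrableOn f₂ (Set.Icc (0:ℝ) 1) := hf₂cont.integrableOn_Icc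
  have hdOn : IntegrableOn d (Set.Icc (0:ℝ) 1) := hf₁On.sub hf₂On
  have habsdOn : IntegrableOn (fun u => |d u|) (Set.Icc (0:ℝ) 1) := hdOn.abs
  -- extended |d|
  set H : ℝ → ℝ := (Set.Icc (0:ℝ) 1).indicator (fun u => |d u|) with hHdef
  have hH_int : Integrable H := (integrable_indicator_iff hIcc).2 habsdOn
  have hH_nonneg : ∀ u, 0 ≤ H u := fun u =>
    Set.indicator_nonneg (fun x _ => abs_nonneg _) u
  have hH_ii : ∀ x y : ℝ, IntervalIntegrable H volume x y := fun x y =>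
    hH_int.intervalIntegrable
  set G : ℝ → ℝ := fun x => ∫ u in (0:ℝ)..x, H u with hGdef
  have hG_cont : Continuous G := continuous_primitive hH_ii 0
  have hG_nonneg : ∀ x, 0 ≤ x → 0 ≤ G x := fun x hx =>
    intervalIntegral.integral_nonneg hx fun u _ => hH_nonneg u
  set w : ℝ → ℝ := fun x => ∫ u in (0:ℝ)..x, G u with hwdef
  have hw_deriv : ∀ t : ℝ, HasDerivAt w (G t) t := fun t =>
    integral_hasDerivAt_right ((hG_cont.intervalIntegrable 0 t :
      IntervalIntegrable G MeasureTheory.volume 0 t))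
      (hG_cont.stronglyMeasurableAtFilter MeasureTheory.volume (nhds t)) hG_cont.continuousAt
  have hw_cont : Continuous w := continuous_primitive
    (fun x y => hG_cont.intervalIntegrable x y) 0
  have hw_nonneg : ∀ x, 0 ≤ x → 0 ≤ w x := fun x hx =>
    intervalIntegral.integral_nonneg hx fun u hu => hG_nonneg u hu.1
  have hw_mono : ∀ x y : ℝ, 0 ≤ x → x ≤ y → w x ≤ w y := by
    intro x y hx hxy
    have hadd := intervalIntegral.integral_add_adjacent_intervals
      (hG_cont.intervalIntegrable 0 x : IntervalIntegrable G MeasureTheory.volume 0 x)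
      (hG_cont.intervalIntegrable x y : IntervalIntegrable G MeasureTheory.volume x y)
    have hpos : (0:ℝ) ≤ ∫ u in x..y, G u :=
      intervalIntegral.integral_nonneg hxy (fun u hu => hG_nonneg u (hx.trans hu.1))
    simp only [hwdef]
    linarith
  -- the basic inequality
  have star : ∀ t ∈ Set.Icc (0:ℝ) 1, |W t - V t| ≤ ε + a * w t := by
    intro t ht
    obtain ⟨ht0, ht1⟩ := ht
    have hf₁ii : ∀ s ∈ Set.Icc (0:ℝ) 1, IntervalIntegrable f₁ volume 0 s := fun s hs =>
      (hf₁On.mono_set (by rw [Set.uIcc_of_le hs.1]; exact Set.Icc_subset_Icc le_rfl hs.2)).intervalIntegrable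
    have hf₂ii : ∀ s ∈ Set.Icc (0:ℝ) 1, IntervalIntegrable f₂ volume 0 s := fun s hs =>
      (hf₂On.mono_set (by rw [Set.uIcc_of_le hs.1]; exact Set.Icc_subset_Icc le_rfl hs.2)).intervalIntegrable
    have hdii : ∀ s ∈ Set.Icc (0:ℝ) 1, IntervalIntegrable d volume 0 s := fun s hs =>
      (hf₁ii s hs).sub (hf₂ii s hs)
    -- primitives
    set F : ℝ → ℝ := fun s => ∫ u in (0:ℝ)..s, d u with hFdef
    have hsubIcc : Set.uIcc (0:ℝ) t ⊆ Set.Icc 0 1 := by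
      rw [Set.uIcc_of_le ht0]; exact Set.Icc_subset_Icc le_rfl ht1
    have hF_cont : ContinuousOn F (Set.uIcc (0:ℝ) t) :=
      continuousOn_primitive_interval (hdOn.mono_set hsubIcc)
    have hP₁_cont : ContinuousOn (fun s => ∫ u in (0:ℝ)..s, f₁ u) (Set.uIcc (0:ℝ) t) :=
      continuousOn_primitive_interval (hf₁On.mono_set hsubIcc)
    have hP₂_cont : ContinuousOn (fun s => ∫ u in (0:ℝ)..s, f₂ u) (Set.uIcc (0:ℝ) t) :=
      continuousOn_primitive_interval (hf₂On.mono_set hsubIcc)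
    -- identity
    have hid : W t - V t = a * (∫ s in (0:ℝ)..t, F s) + R t := by
      have e1 := hW t ⟨ht0, ht1⟩
      have e2 := hV t ⟨ht0, ht1⟩
      have e3 : (∫ s in (0:ℝ)..t, F s)
          = (∫ s in (0:ℝ)..t, (∫ u in (0:ℝ)..s, f₁ u))
            - (∫ s in (0:ℝ)..t, (∫ u in (0:ℝ)..s, f₂ u)) := by
        rw [← intervalIntegral.integral_sub (hP₁_cont.intervalIntegrable)
          (hP₂_cont.intervalIntegrable)]
        apply intervalIntegral.integral_congr
        intro s hs
        have hs' : s ∈ Set.Icc (0:ℝ) 1 := hsubIcc hs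
        show F s = (∫ u in (0:ℝ)..s, f₁ u) - ∫ u in (0:ℝ)..s, f₂ u
        simp only [hFdef, hddef]
        exact intervalIntegral.integral_sub (hf₁ii s hs') (hf₂ii s hs')
      rw [e1, e2, e3]
      ring
    -- bound
    have hFabs : ∀ s ∈ Set.Icc (0:ℝ) t, |F s| ≤ G s := by
      intro s hs
      have hs' : s ∈ Set.Icc (0:ℝ) 1 := ⟨hs.1, hs.2.trans ht1⟩
      have h1 : |F s| ≤ ∫ u in (0:ℝ)..s, |d u| :=
        intervalIntegral.abs_integral_le_integral_abs hs.1
      have h2 : (∫ u in (0:ℝ)..s, |d u|) = G s := by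
        apply intervalIntegral.integral_congr
        intro u hu
        have hu' : u ∈ Set.Icc (0:ℝ) 1 := by
          rw [Set.uIcc_of_le hs.1] at hu
          exact ⟨hu.1, hu.2.trans hs'.2⟩
        exact (Set.indicator_of_mem hu' (fun u => |d u|)).symm
      rw [← h2]; exact h1
    have hbound : |W t - V t| ≤ a * |∫ s in (0:ℝ)..t, F s| + ε := by
      rw [hid]
      calc |a * (∫ s in (0:ℝ)..t, F s) + R t|
          ≤ |a * (∫ s in (0:ℝ)..t, F s)| + |R t| := abs_add_le _ _
        _ ≤ a * |∫ s in (0:ℝ)..t, F s| + ε := by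
            rw [abs_mul, abs_of_nonneg ha]
            exact add_le_add_right (hRε t ⟨ht0, ht1⟩) _
    have hFint : |∫ s in (0:ℝ)..t, F s| ≤ w t := by
      calc |∫ s in (0:ℝ)..t, F s| ≤ ∫ s in (0:ℝ)..t, |F s| :=
            intervalIntegral.abs_integral_le_integral_abs ht0
        _ ≤ ∫ s in (0:ℝ)..t, G s := by
            apply intervalIntegral.integral_mono_on ht0
            · exact (continuous_abs.comp_continuousOn hF_cont).intervalIntegrable
            · exact hG_cont.intervalIntegrable 0 t
            · exact hFabs
        _ = w t := rfl
    calc |W t - V t| ≤ a * |∫ s in (0:ℝ)..t, F s| + ε := hbound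
      _ ≤ a * w t + ε := add_le_add_left (mul_le_mul_of_nonneg_left hFint ha) _
      _ = ε + a * w t := by ring
  -- Gronwall
  have hgron : ∀ t ∈ Set.Icc (0:ℝ) 1, ‖w t‖ ≤ gronwallBound 0 a ε (t - 0) := by
    apply norm_le_gronwallBound_of_norm_deriv_right_le (f' := G)
      hw_cont.continuousOn
      (fun x _ => (hw_deriv x).hasDerivWithinAt)
    · simp [hwdef]
    · intro x hx
      obtain ⟨hx0, hx1⟩ := hx
      have hwx : 0 ≤ w x := hw_nonneg x hx0
      rw [Real.norm_eq_abs, Real.norm_eq_abs, abs_of_nonneg (hG_nonneg x hx0),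
        abs_of_nonneg hwx]
      have hGle : G x ≤ (ε + a * w x) * x := by
        calc G x = ∫ u in (0:ℝ)..x, H u := rfl
          _ ≤ ∫ u in (0:ℝ)..x, (ε + a * w x) := by
              apply intervalIntegral.integral_mono_on hx0 (hH_ii 0 x)
                intervalIntegrable_const
              intro u hu
              have hu' : u ∈ Set.Icc (0:ℝ) 1 := ⟨hu.1, hu.2.trans hx1.le⟩
              have : H u = |d u| := Set.indicator_of_mem hu' _
              rw [this]
              calc |d u| ≤ |W u - V u| := hdbd u hu'
                _ ≤ ε + a * w u := star u hu'
                _ ≤ ε + a * w x := by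
                    have := hw_mono u x hu.1 hu.2
                    nlinarith
          _ = (ε + a * w x) * x := by
              rw [intervalIntegral.integral_const, smul_eq_mul, sub_zero, mul_comm]
      have hx01 : x ≤ 1 := hx1.le
      have hnn : 0 ≤ ε + a * w x := by positivity
      calc G x ≤ (ε + a * w x) * x := hGle
        _ ≤ (ε + a * w x) * 1 := by nlinarith
        _ = a * w x + ε := by ring
  -- conclude
  intro t ht
  have h1 := star t ht
  have h2 := hgron t ht
  rw [Real.norm_eq_abs, abs_of_nonneg (hw_nonneg t ht.1), sub_zero] at h2
  have hfinal : ε + a * gronwallBound 0 a ε t ≤ ε * Real.exp a := by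
    rcases eq_or_lt_of_le ha with h0 | hapos
    · rw [← h0]
      simp [gronwallBound_K0]
    · rw [gronwallBound_of_K_ne_0 (ne_of_gt hapos)]
      have hat : a * t ≤ a * 1 := mul_le_mul_of_nonneg_left ht.2 ha
      have : ε + a * (0 * Real.exp (a * t) + ε / a * (Real.exp (a * t) - 1))
          = ε * Real.exp (a * t) := by
        field_simp
        ring
      rw [this]
      have := Real.exp_le_exp.2 (by linarith : a * t ≤ a)
      nlinarith
  calc |W t - V t| ≤ ε + a * w t := h1
    _ ≤ ε + a * gronwallBound 0 a ε t := by nlinarith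
    _ ≤ ε * Real.exp a := hfinal

/-- If `V` solves the limiting integral equation and each `V̄_N` solves it up to a remainder
`R̄_N` that tends to `0` uniformly on `[0,1]`, then `V̄_N → V` uniformly on `[0,1]`. -/
theorem scaled_voltage_uniform_convergence (a : ℝ) (ha : 0 ≤ a)
    (V : ℝ → ℝ) (hV_cont : ContinuousOn V (Set.Icc (0:ℝ) 1))
    (hV1 : ∀ t ∈ Set.Icc (0:ℝ) 1, 1 ≤ V t)
    (hV : ∀ t ∈ Set.Icc (0:ℝ) 1,
      V t = 1 + a * ∫ x in (0:ℝ)..t, (∫ y in (0:ℝ)..x, 1 / V y))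
    (Vb : ℕ → ℝ → ℝ) (R : ℕ → ℝ → ℝ)
    (hVb_meas : ∀ N, Measurable (Vb N))
    (hVb_bdd : ∀ N, ∃ M, ∀ t ∈ Set.Icc (0:ℝ) 1, |Vb N t| ≤ M)
    (hVb1 : ∀ N, ∀ t ∈ Set.Icc (0:ℝ) 1, 1 ≤ Vb N t)
    (hVb : ∀ N, ∀ t ∈ Set.Icc (0:ℝ) 1,
      Vb N t = 1 + a * (∫ s in (0:ℝ)..t, (∫ u in (0:ℝ)..s, 1 / Vb N u)) + R N t)
    (hR : TendstoUniformlyOn R 0 Filter.atTop (Set.Icc (0:ℝ) 1)) :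
    TendstoUniformlyOn Vb V Filter.atTop (Set.Icc (0:ℝ) 1) := by
  rw [Metric.tendstoUniformlyOn_iff] at hR ⊢
  intro η hη
  have hexp : (0:ℝ) < Real.exp a := Real.exp_pos a
  set ε₀ : ℝ := η / (2 * Real.exp a) with hε₀def
  have hε₀pos : 0 < ε₀ := by positivity
  filter_upwards [hR ε₀ hε₀pos] with N hN
  intro t ht
  have hkey := key_bound a ha V (Vb N) (R N) hV_cont hV1 hV (hVb_meas N) (hVb1 N)
    (hVb N) ε₀ hε₀pos.le (fun s hs => by
      have := hN s hs
      rw [dist_comm] at this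
      simpa [Real.dist_eq] using this.le) t ht
  rw [Real.dist_eq]
  rw [abs_sub_comm]
  calc |Vb N t - V t| ≤ ε₀ * Real.exp a := hkey
    _ = η / 2 := by
        rw [hε₀def]
        field_simp
    _ < η := by linarith
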